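/- Let g ≥ 1 and m ≥ 1 be integers, let ε ∈ {1, −1}, and let n₀ > n₁ > ⋯ > n_{2m} be integers with n₀ = g, n₁ = g − 1, and n_{2m−j} = −n_j for every 0 ≤ j ≤ 2m. Set Δ = ε·∑_{j=0}^{2m} (−1)^j t^{n_j} ∈ ℤ[t, t⁻¹]. Then every coefficient of the product Δ·(t⁻¹ + 1 + t) lies in {−1, 0, 1}, and moreover the coefficients of t^{g} and of t^{−g} in this product are both zero (these are the second and second-to-last coefficients, the extreme terms of the product being ±t^{g+1} and ±t^{−(g+1)}). -/

import Mathlib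

open LaurentPolynomial

private lemma sumNegOne (a b : ℕ) :
    (∑ j ∈ Finset.Ico a b, (-1:ℤ)^j) = -1 ∨ (∑ j ∈ Finset.Ico a b, (-1:ℤ)^j) = 0 ∨
      (∑ j ∈ Finset.Ico a b, (-1:ℤ)^j) = 1 := by
  rcases le_or_gt a b with h | h
  · have h2 : ∀ c, a ≤ c → 2 * (∑ j ∈ Finset.Ico a c, (-1:ℤ)^j) = (-1)^a - (-1)^c := by
      intro c hc
      induction c, hc using Nat.le_induction with
      | base => simp
      | succ k hk ih => rw [Finset.sum_Ico_succ_top hk, mul_add, ih, pow_succ]; ring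
    have ha : (-1:ℤ)^a = 1 ∨ (-1:ℤ)^a = -1 := neg_one_pow_eq_or ℤ a
    have hb : (-1:ℤ)^b = 1 ∨ (-1:ℤ)^b = -1 := neg_one_pow_eq_or ℤ b
    have := h2 b h
    rcases ha with ha | ha <;> rcases hb with hb | hb <;> rw [ha, hb] at this <;> omega
  · right; left; rw [Finset.Ico_eq_empty (by omega)]; simp

private lemma convexIco (S : Finset ℕ)
    (h : ∀ a b c, a ∈ S → c ∈ S → a ≤ b → b ≤ c → b ∈ S) :
    ∃ a b, S = Finset.Ico a b := by
  rcases S.eq_empty_or_nonempty with rfl | hS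
  · exact ⟨0, 0, by simp⟩
  · refine ⟨S.min' hS, S.max' hS + 1, ?_⟩
    ext j
    simp only [Finset.mem_Ico]
    constructor
    · intro hj; exact ⟨S.min'_le j hj, Nat.lt_succ_of_le (S.le_max' j hj)⟩
    · rintro ⟨h1, h2⟩
      exact h _ j _ (S.min'_mem hS) (S.max'_mem hS) h1 (by omega)

theorem stmt_0 (g : ℤ) (hg : 1 ≤ g) (m : ℕ) (hm : 1 ≤ m) (ε : ℤ)
    (hε : ε = 1 ∨ ε = -1) (n : ℕ → ℤ)
    (hdec : ∀ j, j < 2 * m → n (j + 1) < n j)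
    (hn0 : n 0 = g) (hn1 : n 1 = g - 1)
    (hsym : ∀ j, j ≤ 2 * m → n (2 * m - j) = - n j)
    (Δ P : LaurentPolynomial ℤ)
    (hΔ : Δ = C ε * ∑ j ∈ Finset.range (2 * m + 1), (-1) ^ j * T (n j))
    (hP : P = Δ * (T (-1) + 1 + T 1)) :
    (∀ i : ℤ, P.coeff i ∈ ({-1, 0, 1} : Set ℤ)) ∧ P.coeff g = 0 ∧ P.coeff (-g) = 0 := by
  -- rewrite P as a sum of Finsupp.singles
  have hPform : P = ∑ j ∈ Finset.range (2*m+1),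
      (AddMonoidAlgebra.single (n j - 1) (ε * (-1)^j) + AddMonoidAlgebra.single (n j) (ε * (-1)^j)
        + AddMonoidAlgebra.single (n j + 1) (ε * (-1)^j)) := by
    rw [hP, hΔ, Finset.mul_sum, Finset.sum_mul]
    refine Finset.sum_congr rfl fun j _ => ?_
    have h1 : ((-1 : LaurentPolynomial ℤ))^j = C ((-1:ℤ)^j) := by simp
    rw [h1]
    simp only [single_eq_C_mul_T, ← map_mul, mul_add, add_mul, mul_one, ← T_add, mul_assoc,
      ← T_sub]
    ring_nf
    simp only [map_mul]
    ring
  -- coefficient formula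
  have key : ∀ i : ℤ, P.coeff i = ε * ∑ j ∈ (Finset.range (2*m+1)).filter
      (fun j => i - 1 ≤ n j ∧ n j ≤ i + 1), (-1:ℤ)^j := by
    intro i
    rw [hPform, AddMonoidAlgebra.coeff_sum, Finset.sum_apply', Finset.sum_filter, Finset.mul_sum]
    refine Finset.sum_congr rfl fun j _ => ?_
    simp only [AddMonoidAlgebra.coeff_add, AddMonoidAlgebra.coeff_single, Finsupp.add_apply, Finsupp.single_apply, mul_ite, mul_zero]
    generalize ε * (-1:ℤ)^j = c
    split_ifs <;> omega
  -- monotonicity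
  have mono : ∀ b, b ≤ 2*m → ∀ a, a < b → n b < n a := by
    intro b
    induction b with
    | zero => intro _ a ha; omega
    | succ k ih =>
      intro hb a ha
      have hk := hdec k (by omega)
      rcases Nat.lt_succ_iff_lt_or_eq.mp ha with h | h
      · exact hk.trans (ih (by omega) a h)
      · subst h; exact hk
  refine ⟨?_, ?_, ?_⟩
  · intro i
    obtain ⟨a, b, hS⟩ := convexIco ((Finset.range (2*m+1)).filter
        (fun j => i - 1 ≤ n j ∧ n j ≤ i + 1)) (by
      intro a b c ha hc hab hbc
      simp only [Finset.mem_filter, Finset.mem_range] at ha hc ⊢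
      refine ⟨by omega, ?_, ?_⟩
      · -- i - 1 ≤ n b : n b ≥ n c or b = c
        rcases eq_or_lt_of_le hbc with rfl | hlt
        · exact hc.2.1
        · have := mono c (by omega) b hlt
          omega
      · rcases eq_or_lt_of_le hab with rfl | hlt
        · exact ha.2.2
        · have := mono b (by omega) a hlt
          omega)
    rw [key i, hS]
    simp only [Set.mem_insert_iff, Set.mem_singleton_iff]
    rcases hε with rfl | rfl <;> rcases sumNegOne a b with h | h | h <;> rw [h] <;> norm_num
  · have hS : (Finset.range (2*m+1)).filter (fun j => g - 1 ≤ n j ∧ n j ≤ g + 1)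
        = {0, 1} := by
      ext j
      simp only [Finset.mem_filter, Finset.mem_range, Finset.mem_insert,
        Finset.mem_singleton]
      constructor
      · rintro ⟨hj, hw1, hw2⟩
        by_contra hne
        push_neg at hne
        have h2 : n j < n 1 := mono j (by omega) 1 (by omega)
        omega
      · rintro (rfl | rfl)
        · exact ⟨by omega, by omega, by omega⟩
        · exact ⟨by omega, by omega, by omega⟩
    rw [key g, hS]
    rw [Finset.sum_pair (by omega : (0:ℕ) ≠ 1)]
    norm_num
  · have h2m : n (2*m) = -g := by
      have := hsym 0 (by omega)
      simpa [hn0] using this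
    have h2m1 : n (2*m - 1) = 1 - g := by
      have := hsym 1 (by omega)
      rw [hn1] at this
      omega
    have hS : (Finset.range (2*m+1)).filter (fun j => -g - 1 ≤ n j ∧ n j ≤ -g + 1)
        = {2*m - 1, 2*m} := by
      ext j
      simp only [Finset.mem_filter, Finset.mem_range, Finset.mem_insert,
        Finset.mem_singleton]
      constructor
      · rintro ⟨hj, hw1, hw2⟩
        by_contra hne
        push_neg at hne
        have hjlt : j < 2*m - 1 := by omega
        have h2 : n (2*m - 1) < n j := mono (2*m - 1) (by omega) j hjlt
        omega
      · rintro (rfl | rfl)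
        · exact ⟨by omega, by omega, by omega⟩
        · exact ⟨by omega, by omega, by omega⟩
    rw [key (-g), hS]
    rw [Finset.sum_pair (by omega : 2*m - 1 ≠ 2*m)]
    have e1 : ((-1:ℤ))^(2*m) = 1 := Even.neg_one_pow ⟨m, two_mul m⟩
    have e2 : ((-1:ℤ))^(2*m - 1) = -1 := Odd.neg_one_pow ⟨m - 1, by omega⟩
    rw [e1, e2]
    ring
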